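/- Let H be a vertex-labeled DAG: a finite directed acyclic graph whose intermediate vertices carry labels c(·) ∈ ℝ, with sources and sinks unlabeled. Let (u,v) be an edge of H between two intermediate vertices. Let H' be obtained by the face elimination kernel step: a new vertex w is added with predecessor set P(w) = P(u), successor set S(w) = S(v), and label c(w) = c(v)·c(u); the edge (u,v) is removed; all other vertices, edges and labels are unchanged. Then for every source x and sink y of H, the vertex-labeled path sums agree: J_{H'}(x, y) = J_H(x, y). -/

import Mathlib

open scoped Classical

/-- A path from `s` to `t`: a nonempty sequence of consecutive edges, recorded as the
list of its vertices (at least two of them, consecutive ones related by `R`). -/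
def IsPath {α : Type*} (R : α → α → Prop) (s t : α) (p : List α) : Prop :=
  2 ≤ p.length ∧ p.Chain' R ∧ p.head? = some s ∧ p.getLast? = some t

/-- The vertex-labeled path sum `J(x,y)`: the sum over all paths from `x` to `y` of
the product of the labels of the intermediate (interior) vertices of the path
(an empty sum is `0`). -/
noncomputable def vertexPathSum {α : Type*} (R : α → α → Prop) (lab : α → ℝ)
    (x y : α) : ℝ :=
  ∑' p : {p : List α // IsPath R x y p},
    (((p.1.drop 1).dropLast).map lab).prod

set_option linter.unusedSectionVars false

namespace FaceElim
variable {W : Type*} [DecidableEq W]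

def expand (u v : W) : Option W → List W
  | none => [u, v]
  | some a => [a]

def psi (u v : W) (p : List (Option W)) : List W := p.flatMap (expand u v)

def phi (u v : W) : List W → List (Option W)
  | [] => []
  | [a] => [some a]
  | a :: b :: rest =>
      if a = u ∧ b = v then none :: phi u v rest
      else some a :: phi u v (b :: rest)

lemma psi_cons (u v : W) (o : Option W) (p : List (Option W)) :
    psi u v (o :: p) = expand u v o ++ psi u v p := by simp [psi]

lemma expand_ne_nil (u v : W) (o : Option W) : expand u v o ≠ [] := by
  cases o <;> simp [expand]

lemma psi_ne_nil (u v : W) {p : List (Option W)} (h : p ≠ []) : psi u v p ≠ [] := by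
  cases p with
  | nil => exact absurd rfl h
  | cons o p => cases o <;> simp [psi_cons, expand]

lemma phi_ne_nil (u v : W) {r : List W} (h : r ≠ []) : phi u v r ≠ [] := by
  match r with
  | [a] => simp [phi]
  | a :: b :: rest =>
    rw [phi]
    split <;> simp

lemma psi_phi (u v : W) : ∀ r : List W, psi u v (phi u v r) = r := by
  intro r
  induction r using phi.induct u v with
  | case1 => simp [phi, psi]
  | case2 a => simp [phi, psi, expand]
  | case3 a b rest h ih =>
    rw [phi, if_pos h, psi_cons, ih]
    simp [expand, h.1, h.2]
  | case4 a b rest h ih =>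
    rw [phi, if_neg h, psi_cons, ih, expand]
    rfl

lemma head_phi (u v : W) (c : W) (rest : List W) :
    (phi u v (c :: rest)).head? =
      some (if c = u ∧ rest.head? = some v then none else some c) := by
  cases rest with
  | nil => simp [phi]
  | cons b rest' =>
    rw [phi]
    by_cases h : c = u ∧ b = v
    · rw [if_pos h]; simp [h]
    · rw [if_neg h]
      simp only [List.head?_cons, Option.some.injEq]
      rw [if_neg]
      simpa using h

lemma getLast_phi (u v : W) : ∀ r : List W, ∀ c : W, r.getLast? = some c → c ≠ v →
    (phi u v r).getLast? = some (some c) := by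
  intro r
  induction r using phi.induct u v with
  | case1 => intro c hc _; simp at hc
  | case2 a => intro c hc _; simp at hc; simp [phi, hc]
  | case3 a b rest h ih =>
    intro c hc hcv
    cases rest with
    | nil =>
      simp at hc
      exact absurd (hc ▸ h.2.symm ▸ rfl : c = v) hcv
    | cons z zs =>
      rw [phi, if_pos h]
      have hlast : (z :: zs).getLast? = some c := by
        rw [List.getLast?_cons_cons, List.getLast?_cons_cons] at hc
        exact hc
      have h1 := ih c hlast hcv
      obtain ⟨w, ws, hw⟩ : ∃ w ws, phi u v (z :: zs) = w :: ws := by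
        cases hphi : phi u v (z :: zs) with
        | nil => exact absurd hphi (phi_ne_nil u v (by simp))
        | cons w ws => exact ⟨w, ws, rfl⟩
      rw [hw] at h1 ⊢
      rw [List.getLast?_cons_cons]
      exact h1
  | case4 a b rest h ih =>
    intro c hc hcv
    rw [phi, if_neg h]
    have hlast : (b :: rest).getLast? = some c := by
      rw [List.getLast?_cons_cons] at hc
      exact hc
    have h1 := ih c hlast hcv
    obtain ⟨w, ws, hw⟩ : ∃ w ws, phi u v (b :: rest) = w :: ws := by
      cases hphi : phi u v (b :: rest) with
      | nil => exact absurd hphi (phi_ne_nil u v (by simp))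
      | cons w ws => exact ⟨w, ws, rfl⟩
    rw [hw] at h1 ⊢
    rw [List.getLast?_cons_cons]
    exact h1

lemma phi_psi (u v : W) (hne : u ≠ v) {R' : Option W → Option W → Prop}
    (hforb : ∀ b, R' (some u) (some b) → b ≠ v) :
    ∀ p : List (Option W), p.Chain' R' → phi u v (psi u v p) = p := by
  intro p
  induction p with
  | nil => intro _; simp [psi, phi]
  | cons o p' ih =>
    intro hp
    have htail : p'.Chain' R' := hp.tail
    cases o with
    | none =>
      rw [psi_cons]
      show phi u v (u :: v :: psi u v p') = none :: p'
      rw [phi, if_pos ⟨rfl, rfl⟩, ih htail]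
    | some a =>
      rw [psi_cons]
      show phi u v (a :: psi u v p') = some a :: p'
      cases hpe : psi u v p' with
      | nil =>
        have hp'nil : p' = [] := by
          by_contra h
          exact psi_ne_nil u v h hpe
        simp [phi, hp'nil]
      | cons c rest =>
        rw [phi, if_neg, ← hpe, ih htail]
        rintro ⟨ha, hc⟩
        cases p' with
        | nil => simp [psi] at hpe
        | cons o' p'' =>
          cases o' with
          | none =>
            rw [psi_cons] at hpe
            simp [expand] at hpe
            exact hne (hpe.1.trans hc)
          | some b =>
            rw [psi_cons] at hpe
            simp [expand] at hpe
            have hrel := (List.isChain_cons_cons.mp hp).1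
            rw [ha] at hrel
            exact hforb b hrel (hpe.1.trans hc)

section Graph
variable (B : W → W → Bool) (B' : Option W → Option W → Bool) (u v : W)

lemma chain_psi (huv : B u v = true)
    (hB'ss : ∀ x y : W, B' (some x) (some y) = (B x y && !decide (x = u ∧ y = v)))
    (hB'sn : ∀ x : W, B' (some x) none = B x u)
    (hB'ns : ∀ y : W, B' none (some y) = B v y)
    (hB'nn : B' none none = false) :
    ∀ p : List (Option W), p.Chain' (fun a b => B' a b = true) →
      (psi u v p).Chain' (fun a b => B a b = true) := by
  intro p
  induction p with
  | nil => intro _; simp [psi, List.Chain']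
  | cons o p' ih =>
    intro hp
    rw [psi_cons]
    apply List.IsChain.append
    · cases o <;> simp [expand, huv, List.isChain_cons_cons]
    · exact ih hp.tail
    · intro a ha b hb
      cases p' with
      | nil => simp [psi] at hb
      | cons o' p'' =>
        have hrel : B' o o' = true := (List.isChain_cons_cons.mp hp).1
        cases o with
        | some a' =>
          cases o' with
          | some b' =>
            simp [expand] at ha
            simp [psi_cons, expand] at hb
            rw [hB'ss] at hrel
            subst ha hb
            exact ((Bool.and_eq_true _ _).mp hrel).1
          | none =>
            simp [expand] at ha
            simp [psi_cons, expand] at hb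
            rw [hB'sn] at hrel
            subst ha hb
            exact hrel
        | none =>
          cases o' with
          | some b' =>
            simp [expand] at ha
            simp [psi_cons, expand] at hb
            rw [hB'ns] at hrel
            subst ha hb
            exact hrel
          | none =>
            rw [hB'nn] at hrel
            exact absurd hrel (by simp)

lemma chain_phi {f : W → ℕ} (hacyc : ∀ a b, B a b = true → f a < f b)
    (huv : B u v = true)
    (hB'ss : ∀ x y : W, B' (some x) (some y) = (B x y && !decide (x = u ∧ y = v)))
    (hB'sn : ∀ x : W, B' (some x) none = B x u)
    (hB'ns : ∀ y : W, B' none (some y) = B v y) :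
    ∀ r : List W, r.Chain' (fun a b => B a b = true) →
      (phi u v r).Chain' (fun a b => B' a b = true) := by
  intro r
  induction r using phi.induct u v with
  | case1 => intro _; simp [phi, List.Chain']
  | case2 a => intro _; simp [phi, List.Chain']
  | case3 a b rest h ih =>
    intro hr
    rw [phi, if_pos h]
    have hr1 := (List.isChain_cons_cons.mp hr).2
    apply List.isChain_cons.mpr
    refine ⟨?_, ih hr1.tail⟩
    intro y hy
    cases rest with
    | nil => simp [phi] at hy
    | cons c rest' =>
      rw [head_phi] at hy
      have hbc : B b c = true := (List.isChain_cons_cons.mp hr1).1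
      by_cases hcc : c = u ∧ rest'.head? = some v
      · exfalso
        have hvc : B v c = true := h.2 ▸ hbc
        rw [hcc.1] at hvc
        exact absurd (hacyc v u hvc) (by have := hacyc u v huv; omega)
      · rw [if_neg hcc] at hy
        simp at hy
        subst hy
        rw [hB'ns]
        exact h.2 ▸ hbc
  | case4 a b rest h ih =>
    intro hr
    rw [phi, if_neg h]
    have hr1 := (List.isChain_cons_cons.mp hr).2
    have hab : B a b = true := (List.isChain_cons_cons.mp hr).1
    apply List.isChain_cons.mpr
    refine ⟨?_, ih hr1⟩
    intro y hy
    rw [head_phi] at hy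
    by_cases hcc : b = u ∧ rest.head? = some v
    · rw [if_pos hcc] at hy
      simp at hy
      subst hy
      rw [hB'sn]
      exact hcc.1 ▸ hab
    · rw [if_neg hcc] at hy
      simp at hy
      subst hy
      rw [hB'ss]
      simp [hab, h]

end Graph

lemma decomp {α : Type*} {p : List α} {a b : α} (h2 : 2 ≤ p.length)
    (hh : p.head? = some a) (hl : p.getLast? = some b) :
    ∃ mid, p = a :: mid ++ [b] := by
  cases p with
  | nil => simp at hh
  | cons c t =>
    simp at hh
    subst hh
    have ht : t ≠ [] := by
      intro h; rw [h] at h2; simp at h2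
    refine ⟨t.dropLast, ?_⟩
    have hlast : t.getLast ht = b := by
      rw [List.getLast?_cons, List.getLast?_eq_getLast ht] at hl
      · simpa using hl
    rw [← hlast]
    simp [List.dropLast_append_getLast ht]

lemma psi_append (u v : W) (p q : List (Option W)) :
    psi u v (p ++ q) = psi u v p ++ psi u v q := by simp [psi]

lemma prod_psi (u v : W) (lab : W → ℝ) (lab' : Option W → ℝ)
    (hlab'n : lab' none = lab v * lab u) (hlab's : ∀ x : W, lab' (some x) = lab x) :
    ∀ mid : List (Option W), ((psi u v mid).map lab).prod = (mid.map lab').prod := by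
  intro mid
  induction mid with
  | nil => simp [psi]
  | cons o mid ih =>
    rw [psi_cons, List.map_append, List.prod_append, ih]
    cases o with
    | some a => simp [expand, hlab's]
    | none =>
      simp only [expand, List.map_cons, List.map_nil, List.prod_cons, List.prod_nil, hlab'n]
      ring

lemma interior_decomp {α : Type*} (a b : α) (l : List α) :
    ((a :: l ++ [b]).drop 1).dropLast = l := by
  simp

end FaceElim

open FaceElim in
/-- **The face elimination kernel step preserves path sums.**
`H` is a vertex-labeled dag (adjacency `B`, labels `lab`, acyclic via a topological
order `f`), and `(u,v)` is an edge between two intermediate vertices.  `H'` (on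
`Option W`, the fresh vertex being `none`) is obtained by adding a new vertex `w`
with `P(w) = P(u)`, `S(w) = S(v)` and label `lab v * lab u`, and removing the edge
`(u,v)`; everything else is unchanged.  Then for every source `x` and sink `y` of
`H`, `J_{H'}(x,y) = J_H(x,y)`. -/
theorem face_elimination_kernel_preserves_path_sums
    {W : Type*} [Fintype W] [DecidableEq W]
    (B : W → W → Bool) (lab : W → ℝ)
    (f : W → ℕ) (hacyc : ∀ a b, B a b = true → f a < f b)
    (u v : W) (huv : B u v = true)
    (hu : (∃ a, B a u = true) ∧ (∃ b, B u b = true))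
    (hv : (∃ a, B a v = true) ∧ (∃ b, B v b = true))
    (B' : Option W → Option W → Bool) (lab' : Option W → ℝ)
    (hB'ss : ∀ x y : W, B' (some x) (some y) = (B x y && !decide (x = u ∧ y = v)))
    (hB'sn : ∀ x : W, B' (some x) none = B x u)
    (hB'ns : ∀ y : W, B' none (some y) = B v y)
    (hB'nn : B' none none = false)
    (hlab'n : lab' none = lab v * lab u)
    (hlab's : ∀ x : W, lab' (some x) = lab x) :
    ∀ x y : W, (∀ a, B a x = false) → (∀ b, B y b = false) →
      vertexPathSum (fun a b => B' a b = true) lab' (some x) (some y)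
        = vertexPathSum (fun a b => B a b = true) lab x y := by
  intro x y hx hy
  have hfuv := hacyc u v huv
  have hne : u ≠ v := by intro h; rw [h] at hfuv; omega
  obtain ⟨⟨a0, ha0⟩, _⟩ := hu
  obtain ⟨_, ⟨b1, hb1⟩⟩ := hv
  have hxu : x ≠ u := by
    intro h; rw [← h] at ha0; rw [hx a0] at ha0; simp at ha0
  have hyv : y ≠ v := by
    intro h; rw [← h] at hb1; rw [hy b1] at hb1; simp at hb1
  set R : W → W → Prop := fun a b => B a b = true with hR
  set R' : Option W → Option W → Prop := fun a b => B' a b = true with hR'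
  have hforb : ∀ b, R' (some u) (some b) → b ≠ v := by
    intro b hb hbv
    subst hbv
    rw [hR'] at hb
    simp only [hB'ss] at hb
    simp at hb
  have key1 : ∀ p : List (Option W), IsPath R' (some x) (some y) p →
      IsPath R x y (psi u v p) ∧
        ((((psi u v p).drop 1).dropLast).map lab).prod
          = (((p.drop 1).dropLast).map lab').prod := by
    rintro p ⟨h2, hch, hh, hl⟩
    obtain ⟨mid, rfl⟩ := decomp h2 hh hl
    have hpsi : psi u v (some x :: mid ++ [some y]) = x :: psi u v mid ++ [y] := by
      rw [show (some x :: mid ++ [some y] : List (Option W))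
            = [some x] ++ mid ++ [some y] by simp]
      rw [psi_append, psi_append]
      simp [psi, expand]
    refine ⟨⟨?_, ?_, ?_, ?_⟩, ?_⟩
    · rw [hpsi]; simp
    · exact chain_psi B B' u v huv hB'ss hB'sn hB'ns hB'nn _ hch
    · rw [hpsi]; simp
    · rw [hpsi]
      show ((x :: psi u v mid) ++ [y]).getLast? = some y
      exact List.getLast?_concat
    · rw [hpsi, interior_decomp, interior_decomp]
      exact prod_psi u v lab lab' hlab'n hlab's mid
  have key2 : ∀ r : List W, IsPath R x y r → IsPath R' (some x) (some y) (phi u v r) := by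
    rintro r ⟨h2, hch, hh, hl⟩
    obtain ⟨mid, rfl⟩ := decomp h2 hh hl
    have hnotx : ¬ (x = u ∧ (mid ++ [y]).head? = some v) := fun h => hxu h.1
    refine ⟨?_, ?_, ?_, ?_⟩
    · cases mid with
      | nil =>
        show 2 ≤ (phi u v (x :: [y])).length
        rw [phi, if_neg (fun h => hxu h.1)]
        simp [phi]
      | cons m ms =>
        show 2 ≤ (phi u v (x :: m :: (ms ++ [y]))).length
        rw [phi, if_neg (fun h => hxu h.1)]
        have h1 : 0 < (phi u v (m :: (ms ++ [y]))).length :=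
          List.length_pos_iff.mpr (phi_ne_nil u v (by simp))
        simp only [List.length_cons]
        omega
    · exact chain_phi B B' u v hacyc huv hB'ss hB'sn hB'ns _ hch
    · show (phi u v (x :: (mid ++ [y]))).head? = some (some x)
      rw [head_phi, if_neg hnotx]
    · apply getLast_phi u v _ y _ hyv
      show ((x :: mid) ++ [y]).getLast? = some y
      exact List.getLast?_concat
  let e : {p : List (Option W) // IsPath R' (some x) (some y) p}
      ≃ {r : List W // IsPath R x y r} :=
  { toFun := fun p => ⟨psi u v p.1, (key1 p.1 p.2).1⟩
    invFun := fun r => ⟨phi u v r.1, key2 r.1 r.2⟩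
    left_inv := fun p => Subtype.ext (phi_psi u v hne hforb p.1 p.2.2.1)
    right_inv := fun r => Subtype.ext (psi_phi u v r.1) }
  rw [vertexPathSum, vertexPathSum, ← Equiv.tsum_eq e]
  exact tsum_congr fun p => ((key1 p.1 p.2).2).symm
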